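/- Let G be a finite simple graph on n vertices and let p(x,y|v,w) be a synchronous vectorial correlation with inputs and outputs V(G) that is a winning strategy for the homomorphism game from G to G (i.e. p(x,y|v,w) = 0 whenever (v,w) ∈ E(G) and (x,y) ∉ E(G)). Define p₁ = p and recursively p_{k+1}(x,y|v,w) = Σ_{a,b} p(x,y|a,b) p_k(a,b|v,w), and for a Banach generalized limit glim set r(x,y|v,w) = glim(k ↦ p_k(x,y|v,w)). Then r is again a synchronous vectorial correlation with inputs and outputs V(G) that is a winning strategy for the homomorphism game from G to G, and moreover: (1) the associated map satisfies φ_r(A)_{x,y} = glim(k ↦ (φ_p^k(A))_{x,y}) for all A ∈ M_n(ℂ); and (2) r(x,y|v,w) = Σ_{a,b} r(x,y|a,b) r(a,b|v,w), so that φ_r ∘ φ_r = φ_r. -/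

import Mathlib

open scoped InnerProductSpace ComplexOrder

/-- A realization of a (complex-valued, but in fact nonnegative real) family
`p(x,y|v,w)` as a vectorial correlation. -/
structure VectRealization {I O : Type} [Fintype O] (p : O → O → I → I → ℂ) where
  H : Type
  [nacg : NormedAddCommGroup H]
  [ips : InnerProductSpace ℂ H]
  [cs : CompleteSpace H]
  X : I → O → H
  Y : I → O → H
  orthX : ∀ v : I, ∀ x y : O, x ≠ y → ⟪X v x, X v y⟫_ℂ = 0
  orthY : ∀ w : I, ∀ x y : O, x ≠ y → ⟪Y w x, Y w y⟫_ℂ = 0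
  sumEq : ∀ v w : I, ∑ x, X v x = ∑ y, Y w y
  normOne : ∀ v : I, ‖∑ x, X v x‖ = 1
  nonneg : ∀ v w : I, ∀ x y : O, 0 ≤ p x y v w
  eq : ∀ (x y : O) (v w : I), p x y v w = ⟪X v x, Y w y⟫_ℂ

/-- `p` is a vectorial correlation if it admits a vectorial realization. -/
def IsVectCorrelation {I O : Type} [Fintype O] (p : O → O → I → I → ℂ) : Prop :=
  Nonempty (VectRealization p)

/-- `p` is synchronous: `p(x,y|v,v) = 0` for all `v` and all `x ≠ y`. -/
def Synchronous {I O : Type} (p : O → O → I → I → ℂ) : Prop :=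
  ∀ (v : I) (x y : O), x ≠ y → p x y v v = 0

/-- The winning condition for the graph homomorphism game from `G` to `H`. -/
def WinningFor {VG VH : Type} (G : SimpleGraph VG) (Hg : SimpleGraph VH)
    (p : VH → VH → VG → VG → ℂ) : Prop :=
  ∀ (v w : VG) (x y : VH), G.Adj v w → ¬ Hg.Adj x y → p x y v w = 0

/-- A Banach generalized limit. -/
def IsBanachLimit (glim : (ℕ → ℂ) →ₗ[ℂ] ℂ) : Prop :=
  (∀ (a : ℕ → ℂ) (L : ℂ), Filter.Tendsto a Filter.atTop (nhds L) → glim a = L) ∧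
  (∀ a : ℕ → ℂ, (∃ C : ℝ, ∀ k, ‖a k‖ ≤ C) → (∀ k, 0 ≤ a k) → 0 ≤ glim a) ∧
  (∀ a : ℕ → ℂ, (∃ C : ℝ, ∀ k, ‖a k‖ ≤ C) → glim (fun k => a (k + 1)) = glim a)

/-- The map `φ_p(A)_{x,y} = Σ_{v,w} p(x,y|v,w) A_{v,w}`. -/
noncomputable def phiMap {n : ℕ} (p : Fin n → Fin n → Fin n → Fin n → ℂ)
    (A : Matrix (Fin n) (Fin n) ℂ) : Matrix (Fin n) (Fin n) ℂ :=
  Matrix.of fun x y => ∑ v, ∑ w, p x y v w * A v w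


/- ========== basic helpers (already tested) ========== -/
lemma aux_inner_self {H : Type} [NormedAddCommGroup H] [InnerProductSpace ℂ H]
    (u : H) : ⟪u, u⟫_ℂ = ((‖u‖^2 : ℝ) : ℂ) := by
  have := inner_self_eq_norm_sq_to_K (𝕜 := ℂ) u
  exact_mod_cast this

lemma aux_norm_eq_one {H : Type} [NormedAddCommGroup H] [InnerProductSpace ℂ H]
    {u : H} (h : ⟪u, u⟫_ℂ = 1) : ‖u‖ = 1 := by
  rw [aux_inner_self] at h
  have h3 : ‖u‖ ^ 2 = 1 := by exact_mod_cast h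
  nlinarith [norm_nonneg u]

lemma aux_inner_self_nonneg {H : Type} [NormedAddCommGroup H] [InnerProductSpace ℂ H]
    (u : H) : 0 ≤ ⟪u, u⟫_ℂ := by
  rw [aux_inner_self, Complex.zero_le_real]
  positivity

lemma aux_abs_inner_self {H : Type} [NormedAddCommGroup H] [InnerProductSpace ℂ H]
    (u : H) : ‖⟪u, u⟫_ℂ‖ = ‖u‖ ^ 2 := by
  rw [aux_inner_self, Complex.norm_real, Real.norm_eq_abs]
  exact abs_of_nonneg (pow_two_nonneg _)

lemma aux_gram_expand {H : Type} [NormedAddCommGroup H] [InnerProductSpace ℂ H]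
    {J : Type} [Fintype J] (Z : J → H) (c d : J → ℂ) :
    ⟪∑ j, c j • Z j, ∑ j, d j • Z j⟫_ℂ
      = ∑ j, ∑ j', (starRingEnd ℂ) (c j) * d j' * ⟪Z j, Z j'⟫_ℂ := by
  rw [sum_inner]
  refine Finset.sum_congr rfl fun j _ => ?_
  rw [inner_sum]
  refine Finset.sum_congr rfl fun j' _ => ?_
  rw [inner_smul_left, inner_smul_right]; ring

open scoped MatrixOrder in
lemma aux_exists_gram {J : Type} [Fintype J] [DecidableEq J] {G : Matrix J J ℂ}
    (hG : G.PosSemidef) :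
    ∃ Z : J → EuclideanSpace ℂ J, ∀ j j', ⟪Z j, Z j'⟫_ℂ = G j j' := by
  obtain ⟨B, hB⟩ := CStarAlgebra.nonneg_iff_eq_star_mul_self.mp (Matrix.nonneg_iff_posSemidef.mpr hG)
  refine ⟨fun j => WithLp.toLp 2 (fun i => B i j), fun j j' => ?_⟩
  rw [hB, Matrix.star_eq_conjTranspose, PiLp.inner_apply]
  simp [Matrix.mul_apply, Matrix.conjTranspose_apply, RCLike.inner_apply, mul_comm]

lemma lam_mul (Λ : (ℕ → ℂ) →ₗ[ℂ] ℂ) (c : ℂ) (a : ℕ → ℂ) :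
    Λ (fun k => c * a k) = c * Λ a := by
  have : (fun k => c * a k) = c • a := rfl
  rw [this, map_smul]; rfl

lemma lam_sum (Λ : (ℕ → ℂ) →ₗ[ℂ] ℂ) {ι : Type} (s : Finset ι) (f : ι → ℕ → ℂ) :
    Λ (fun k => ∑ i ∈ s, f i k) = ∑ i ∈ s, Λ (f i) := by
  rw [show (fun k => ∑ i ∈ s, f i k) = ∑ i ∈ s, f i from funext fun k => (Finset.sum_apply k s f).symm,
    map_sum]

lemma lam_real (Λ : (ℕ → ℂ) →ₗ[ℂ] ℂ)
    (hconst : ∀ c : ℂ, Λ (fun _ => c) = c)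
    (hpos : ∀ a : ℕ → ℂ, (∃ C : ℝ, ∀ k, ‖a k‖ ≤ C) → (∀ k, 0 ≤ a k) → 0 ≤ Λ a)
    (a : ℕ → ℂ) (C : ℝ) (hb : ∀ k, ‖a k‖ ≤ C) (hre : ∀ k, (a k).im = 0) :
    (Λ a).im = 0 := by
  have h1 : 0 ≤ Λ (fun k => a k + (C:ℂ)) := by
    apply hpos
    · exact ⟨2*C, fun k => by
        have h0 : (0:ℝ) ≤ C := le_trans (norm_nonneg _) (hb 0)
        calc ‖a k + C‖ ≤ ‖a k‖ + ‖(C:ℂ)‖ := norm_add_le _ _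
        _ ≤ C + C := by
            have := hb k
            rw [Complex.norm_real, Real.norm_of_nonneg h0]
            linarith
        _ = 2*C := by ring⟩
    · intro k
      rw [Complex.nonneg_iff]
      constructor
      · have h2 : |(a k).re| ≤ C := le_trans (Complex.abs_re_le_norm _) (hb k)
        simp
        have := abs_le.mp h2
        linarith [this.1]
      · simp [hre k]
  have h2 : Λ (fun k => a k + (C:ℂ)) = Λ a + C := by
    have : (fun k => a k + (C:ℂ)) = a + (fun _ => (C:ℂ)) := rfl
    rw [this, map_add, hconst]
  rw [h2, Complex.nonneg_iff] at h1
  have := h1.2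
  simp at this
  linarith [this]

lemma lam_conj (Λ : (ℕ → ℂ) →ₗ[ℂ] ℂ)
    (hconst : ∀ c : ℂ, Λ (fun _ => c) = c)
    (hpos : ∀ a : ℕ → ℂ, (∃ C : ℝ, ∀ k, ‖a k‖ ≤ C) → (∀ k, 0 ≤ a k) → 0 ≤ Λ a)
    (a : ℕ → ℂ) (C : ℝ) (hb : ∀ k, ‖a k‖ ≤ C) :
    Λ (fun k => (starRingEnd ℂ) (a k)) = (starRingEnd ℂ) (Λ a) := by
  set ar : ℕ → ℂ := fun k => ((a k).re : ℂ) with har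
  set ai : ℕ → ℂ := fun k => ((a k).im : ℂ) with hai
  have hdec : a = fun k => ar k + Complex.I * ai k := by
    funext k; simp [ar, ai, Complex.ext_iff]
  have hdecc : (fun k => (starRingEnd ℂ) (a k)) = fun k => ar k - Complex.I * ai k := by
    funext k; simp [ar, ai, Complex.ext_iff]
  have hbr : ∀ k, ‖ar k‖ ≤ C := fun k => by
    simp only [ar, Complex.norm_real, Real.norm_eq_abs]
    exact le_trans (Complex.abs_re_le_norm _) (hb k)
  have hbi : ∀ k, ‖ai k‖ ≤ C := fun k => by
    simp only [ai, Complex.norm_real, Real.norm_eq_abs]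
    exact le_trans (Complex.abs_im_le_norm _) (hb k)
  have hr1 : (Λ ar).im = 0 := lam_real Λ hconst hpos ar C hbr (fun k => by simp [ar])
  have hr2 : (Λ ai).im = 0 := lam_real Λ hconst hpos ai C hbi (fun k => by simp [ai])
  have e1 : Λ a = Λ ar + Complex.I * Λ ai := by
    rw [hdec]
    have : (fun k => ar k + Complex.I * ai k) = ar + Complex.I • ai := rfl
    rw [this, map_add, map_smul]; rfl
  have e2 : Λ (fun k => (starRingEnd ℂ) (a k)) = Λ ar - Complex.I * Λ ai := by
    rw [hdecc]
    have : (fun k => ar k - Complex.I * ai k) = ar - Complex.I • ai := rfl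
    rw [this, map_sub, map_smul]; rfl
  rw [e1, e2, Complex.ext_iff]
  constructor <;> simp [hr1, hr2]

/- ========== realization structure ========== -/
structure AuxReal {n : ℕ} (p : Fin n → Fin n → Fin n → Fin n → ℂ)
    (H : Type) [NormedAddCommGroup H] [InnerProductSpace ℂ H] where
  X : Fin n → Fin n → H
  Y : Fin n → Fin n → H
  orthX : ∀ v x y, x ≠ y → ⟪X v x, X v y⟫_ℂ = 0
  orthY : ∀ w x y, x ≠ y → ⟪Y w x, Y w y⟫_ℂ = 0
  sumEq : ∀ v w, ∑ x, X v x = ∑ y, Y w y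
  normOne : ∀ v, ‖∑ x, X v x‖ = 1
  eq : ∀ x y v w, p x y v w = ⟪X v x, Y w y⟫_ℂ

lemma aux_orth_sum {n : ℕ} {H : Type} [NormedAddCommGroup H] [InnerProductSpace ℂ H]
    (u : Fin n → H) (horth : ∀ x y, x ≠ y → ⟪u x, u y⟫_ℂ = 0) (x₀ : Fin n) :
    ‖u x₀‖ ≤ ‖∑ x, u x‖ := by
  have h1 : ⟪∑ x, u x, ∑ x, u x⟫_ℂ = ∑ x, ⟪u x, u x⟫_ℂ := by
    rw [sum_inner]
    refine Finset.sum_congr rfl fun x _ => ?_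
    rw [inner_sum]
    rw [Finset.sum_eq_single x]
    · intro y _ hyx; exact horth x y (Ne.symm hyx)
    · intro h; exact absurd (Finset.mem_univ x) h
  have h2 : ‖∑ x, u x‖^2 = ∑ x, ‖u x‖^2 := by
    have h := h1
    simp only [aux_inner_self] at h
    rw [← Complex.ofReal_sum] at h
    exact_mod_cast h
  have h3 : ‖u x₀‖^2 ≤ ‖∑ x, u x‖^2 := by
    rw [h2]
    exact Finset.single_le_sum (f := fun x => ‖u x‖^2) (fun x _ => sq_nonneg ‖u x‖) (Finset.mem_univ x₀)
  nlinarith [norm_nonneg (u x₀), norm_nonneg (∑ x, u x)]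

lemma AuxReal.normX_le {n : ℕ} {p : Fin n → Fin n → Fin n → Fin n → ℂ}
    {H : Type} [NormedAddCommGroup H] [InnerProductSpace ℂ H]
    (P : AuxReal p H) (v x : Fin n) : ‖P.X v x‖ ≤ 1 := by
  have := aux_orth_sum (P.X v) (P.orthX v) x
  rw [P.normOne v] at this; exact this

lemma AuxReal.normY_le {n : ℕ} {p : Fin n → Fin n → Fin n → Fin n → ℂ}
    {H : Type} [NormedAddCommGroup H] [InnerProductSpace ℂ H]
    (P : AuxReal p H) (w y : Fin n) : ‖P.Y w y‖ ≤ 1 := by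
  have h := aux_orth_sum (P.Y w) (P.orthY w) y
  rw [← P.sumEq w w, P.normOne w] at h; exact h

lemma AuxReal.abs_le_one {n : ℕ} {p : Fin n → Fin n → Fin n → Fin n → ℂ}
    {H : Type} [NormedAddCommGroup H] [InnerProductSpace ℂ H]
    (P : AuxReal p H) (x y v w : Fin n) : ‖p x y v w‖ ≤ 1 := by
  rw [P.eq x y v w]
  calc ‖⟪P.X v x, P.Y w y⟫_ℂ‖ ≤ ‖P.X v x‖ * ‖P.Y w y‖ := norm_inner_le_norm _ _
  _ ≤ 1 * 1 := mul_le_mul (P.normX_le v x) (P.normY_le w y) (norm_nonneg _) zero_le_one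
  _ = 1 := by ring


/- ========== the core GNS/limit lemma ========== -/
lemma aux_core {n : ℕ} {H : Type} [NormedAddCommGroup H] [InnerProductSpace ℂ H]
    (Λ : (ℕ → ℂ) →ₗ[ℂ] ℂ)
    (hconst : ∀ c : ℂ, Λ (fun _ => c) = c)
    (hpos : ∀ a : ℕ → ℂ, (∃ C : ℝ, ∀ k, ‖a k‖ ≤ C) → (∀ k, 0 ≤ a k) → 0 ≤ Λ a)
    (q : ℕ → Fin n → Fin n → Fin n → Fin n → ℂ)
    (E : ∀ k, AuxReal (q k) H)
    (r : Fin n → Fin n → Fin n → Fin n → ℂ)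
    (hr : ∀ x y v w, r x y v w = Λ (fun k => q k x y v w)) :
    Nonempty (AuxReal r (EuclideanSpace ℂ (Bool × Fin n × Fin n))) := by
  classical
  let Z : ℕ → Bool × Fin n × Fin n → H :=
    fun k j => cond j.1 ((E k).Y j.2.1 j.2.2) ((E k).X j.2.1 j.2.2)
  have hZb : ∀ k j, ‖Z k j‖ ≤ 1 := by
    rintro k ⟨b, v, x⟩
    cases b
    · exact (E k).normX_le v x
    · exact (E k).normY_le v x
  have hZib : ∀ j j' k, ‖⟪Z k j, Z k j'⟫_ℂ‖ ≤ 1 := fun j j' k => by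
    calc ‖⟪Z k j, Z k j'⟫_ℂ‖ ≤ ‖Z k j‖ * ‖Z k j'‖ := norm_inner_le_norm _ _
    _ ≤ 1 * 1 := mul_le_mul (hZb k j) (hZb k j') (norm_nonneg _) zero_le_one
    _ = 1 := one_mul 1
  -- primed restatements of the realization axioms in terms of Z
  have horthX' : ∀ k v x y, x ≠ y → ⟪Z k (false,v,x), Z k (false,v,y)⟫_ℂ = 0 :=
    fun k v x y h => (E k).orthX v x y h
  have horthY' : ∀ k w x y, x ≠ y → ⟪Z k (true,w,x), Z k (true,w,y)⟫_ℂ = 0 :=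
    fun k w x y h => (E k).orthY w x y h
  have hsum' : ∀ k v w, (∑ x, Z k (false,v,x)) = ∑ y, Z k (true,w,y) :=
    fun k v w => (E k).sumEq v w
  have hnorm' : ∀ k v, ‖∑ x, Z k (false,v,x)‖ = 1 := fun k v => (E k).normOne v
  have heq' : ∀ k x y v w, q k x y v w = ⟪Z k (false,v,x), Z k (true,w,y)⟫_ℂ :=
    fun k x y v w => (E k).eq x y v w
  let G : Matrix (Bool × Fin n × Fin n) (Bool × Fin n × Fin n) ℂ :=
    Matrix.of fun j j' => Λ (fun k => ⟪Z k j, Z k j'⟫_ℂ)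
  have hGval : ∀ j j', G j j' = Λ (fun k => ⟪Z k j, Z k j'⟫_ℂ) := fun _ _ => rfl
  have hPSD : G.PosSemidef := by
    refine Matrix.PosSemidef.of_dotProduct_mulVec_nonneg ?_ ?_
    · ext j j'
      rw [Matrix.conjTranspose_apply, hGval, hGval]
      have ha : (fun k => ⟪Z k j', Z k j⟫_ℂ) = fun k => (starRingEnd ℂ) ⟪Z k j, Z k j'⟫_ℂ :=
        funext fun k => (inner_conj_symm _ _).symm
      rw [ha, lam_conj Λ hconst hpos _ 1 (hZib j j')]
      exact Complex.conj_conj _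
    · intro c
      have key : dotProduct (star c) (G.mulVec c)
          = Λ (fun k => ⟪∑ j, c j • Z k j, ∑ j, c j • Z k j⟫_ℂ) := by
        have hfun : (fun k => ⟪∑ j, c j • Z k j, ∑ j, c j • Z k j⟫_ℂ)
            = fun k => ∑ j, ∑ j', (starRingEnd ℂ) (c j) * c j' * ⟪Z k j, Z k j'⟫_ℂ :=
          funext fun k => aux_gram_expand (Z k) c c
        rw [hfun]
        calc dotProduct (star c) (G.mulVec c)
            = ∑ j, (starRingEnd ℂ) (c j) * ∑ j', G j j' * c j' := by
              simp [dotProduct, Matrix.mulVec, Pi.star_apply, Complex.star_def]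
          _ = ∑ j, ∑ j', ((starRingEnd ℂ) (c j) * c j') * G j j' := by
              refine Finset.sum_congr rfl fun j _ => ?_
              rw [Finset.mul_sum]
              exact Finset.sum_congr rfl fun j' _ => by ring
          _ = ∑ j, ∑ j', Λ (fun k => ((starRingEnd ℂ) (c j) * c j') * ⟪Z k j, Z k j'⟫_ℂ) := by
              refine Finset.sum_congr rfl fun j _ => Finset.sum_congr rfl fun j' _ => ?_
              rw [hGval]
              exact (lam_mul Λ _ _).symm
          _ = Λ (fun k => ∑ j, ∑ j', ((starRingEnd ℂ) (c j) * c j') * ⟪Z k j, Z k j'⟫_ℂ) := by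
              rw [lam_sum]
              exact Finset.sum_congr rfl fun j _ => (lam_sum Λ _ _).symm
      rw [key]
      apply hpos
      · refine ⟨(∑ j, ‖c j‖)^2, fun k => ?_⟩
        rw [aux_abs_inner_self]
        have hn : ‖∑ j, c j • Z k j‖ ≤ ∑ j, ‖c j‖ := by
          calc ‖∑ j, c j • Z k j‖ ≤ ∑ j, ‖c j • Z k j‖ := norm_sum_le _ _
          _ ≤ ∑ j, ‖c j‖ := by
              refine Finset.sum_le_sum fun j _ => ?_
              rw [norm_smul]
              exact mul_le_of_le_one_right (norm_nonneg _) (hZb k j)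
        have h0 : (0:ℝ) ≤ ∑ j, ‖c j‖ :=
          Finset.sum_nonneg fun j _ => norm_nonneg _
        nlinarith [norm_nonneg (∑ j, c j • Z k j)]
      · intro k; exact aux_inner_self_nonneg _
  obtain ⟨Zr, hZr⟩ := aux_exists_gram hPSD
  have hKey2 : ∀ (b1 b2 : Bool) (v w : Fin n),
      ⟪∑ x, Zr (b1, v, x), ∑ y, Zr (b2, w, y)⟫_ℂ
        = Λ (fun k => ⟪∑ x, Z k (b1, v, x), ∑ y, Z k (b2, w, y)⟫_ℂ) := by
    intro b1 b2 v w
    have hfun : (fun k => ⟪∑ x, Z k (b1, v, x), ∑ y, Z k (b2, w, y)⟫_ℂ)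
        = fun k => ∑ x, ∑ y, ⟪Z k (b1, v, x), Z k (b2, w, y)⟫_ℂ := by
      funext k
      rw [sum_inner]
      exact Finset.sum_congr rfl fun x _ => inner_sum _ _ _
    rw [hfun, lam_sum, sum_inner]
    refine Finset.sum_congr rfl fun x _ => ?_
    rw [inner_sum, lam_sum]
    refine Finset.sum_congr rfl fun y _ => ?_
    exact (hZr _ _).trans (hGval _ _)
  refine ⟨⟨fun v x => Zr (false, v, x), fun w y => Zr (true, w, y), ?_, ?_, ?_, ?_, ?_⟩⟩
  · -- orthX
    intro v x y hxy
    have h1 : (fun k => ⟪Z k (false,v,x), Z k (false,v,y)⟫_ℂ) = fun _ => (0:ℂ) :=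
      funext fun k => horthX' k v x y hxy
    rw [hZr, hGval, h1]
    exact hconst 0
  · -- orthY
    intro w x y hxy
    have h1 : (fun k => ⟪Z k (true,w,x), Z k (true,w,y)⟫_ℂ) = fun _ => (0:ℂ) :=
      funext fun k => horthY' k w x y hxy
    rw [hZr, hGval, h1]
    exact hconst 0
  · -- sumEq
    intro v w
    have h0 : ∀ k, (∑ x, Z k (false,v,x)) - (∑ y, Z k (true,w,y)) = 0 := fun k => by
      rw [sub_eq_zero]; exact hsum' k v w
    have hin : ⟪(∑ x, Zr (false,v,x)) - (∑ y, Zr (true,w,y)),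
               (∑ x, Zr (false,v,x)) - (∑ y, Zr (true,w,y))⟫_ℂ = 0 := by
      rw [inner_sub_left, inner_sub_right, inner_sub_right]
      rw [hKey2 false false v v, hKey2 false true v w, hKey2 true false w v,
          hKey2 true true w w]
      simp only [← map_sub]
      convert hconst 0 using 2
      funext k
      simp only [Pi.sub_apply]
      rw [← inner_sub_right, ← inner_sub_right, ← inner_sub_left, h0 k, inner_zero_left]
    exact sub_eq_zero.mp (inner_self_eq_zero.mp hin)
  · -- normOne
    intro v
    apply aux_norm_eq_one
    rw [hKey2 false false v v]
    have h1 : (fun k => ⟪∑ x, Z k (false,v,x), ∑ x, Z k (false,v,x)⟫_ℂ) = fun _ => (1:ℂ) := by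
      funext k
      rw [aux_inner_self, hnorm' k v]
      norm_num
    rw [h1]
    exact hconst 1
  · -- eq
    intro x y v w
    rw [hr]
    have h1 : (fun k => q k x y v w) = fun k => ⟪Z k (false,v,x), Z k (true,w,y)⟫_ℂ :=
      funext fun k => heq' k x y v w
    rw [h1, ← hGval, ← hZr]

noncomputable def tmul {α β : Type} [Fintype α] [Fintype β]
    (u : EuclideanSpace ℂ α) (v : EuclideanSpace ℂ β) : EuclideanSpace ℂ (α × β) :=
  WithLp.toLp 2 (fun ij : α × β => u ij.1 * v ij.2)

lemma inner_tmul {α β : Type} [Fintype α] [Fintype β]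
    (u u' : EuclideanSpace ℂ α) (v v' : EuclideanSpace ℂ β) :
    ⟪tmul u v, tmul u' v'⟫_ℂ = ⟪u, u'⟫_ℂ * ⟪v, v'⟫_ℂ := by
  rw [PiLp.inner_apply, PiLp.inner_apply, PiLp.inner_apply]
  rw [Finset.sum_mul_sum]
  rw [Fintype.sum_prod_type]
  refine Finset.sum_congr rfl fun i _ => Finset.sum_congr rfl fun j _ => ?_
  simp only [RCLike.inner_apply, tmul, map_mul]
  ring

lemma tmul_sum_left {α β ι : Type} [Fintype α] [Fintype β]
    (s : Finset ι) (f : ι → EuclideanSpace ℂ α) (v : EuclideanSpace ℂ β) :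
    tmul (∑ i ∈ s, f i) v = ∑ i ∈ s, tmul (f i) v := by
  ext ij
  simp [tmul, WithLp.ofLp_sum, Finset.sum_apply, Finset.sum_mul]

lemma tmul_sum_right {α β ι : Type} [Fintype α] [Fintype β]
    (s : Finset ι) (u : EuclideanSpace ℂ α) (g : ι → EuclideanSpace ℂ β) :
    tmul u (∑ i ∈ s, g i) = ∑ i ∈ s, tmul u (g i) := by
  ext ij
  simp [tmul, WithLp.ofLp_sum, Finset.sum_apply, Finset.mul_sum]

lemma aux_comp {n : ℕ} {p q : Fin n → Fin n → Fin n → Fin n → ℂ}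
    {α β : Type} [Fintype α] [Fintype β] (hn : 0 < n)
    (P : AuxReal p (EuclideanSpace ℂ α)) (Q : AuxReal q (EuclideanSpace ℂ β)) :
    Nonempty (AuxReal (fun x y v w => ∑ a, ∑ b, p x y a b * q a b v w)
      (EuclideanSpace ℂ (α × β))) := by
  classical
  set S : EuclideanSpace ℂ α := ∑ x, P.X ⟨0, hn⟩ x with hS
  have hSX : ∀ a, (∑ x, P.X a x) = S := fun a => by
    rw [hS, P.sumEq a ⟨0, hn⟩, ← P.sumEq ⟨0, hn⟩ ⟨0, hn⟩]
  have hSY : ∀ b, (∑ y, P.Y b y) = S := fun b => by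
    rw [← P.sumEq ⟨0, hn⟩ b, hSX ⟨0, hn⟩]
  have hSnorm : ‖S‖ = 1 := by rw [hS]; exact P.normOne _
  refine ⟨⟨fun v x => ∑ a, tmul (P.X a x) (Q.X v a),
          fun w y => ∑ b, tmul (P.Y b y) (Q.Y w b), ?_, ?_, ?_, ?_, ?_⟩⟩
  · -- orthX
    intro v x y hxy
    rw [sum_inner]
    refine Finset.sum_eq_zero fun a _ => ?_
    rw [inner_sum]
    refine Finset.sum_eq_zero fun b _ => ?_
    rw [inner_tmul]
    by_cases hab : a = b
    · subst hab
      rw [P.orthX a x y hxy, zero_mul]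
    · rw [Q.orthX v a b hab, mul_zero]
  · -- orthY
    intro w x y hxy
    rw [sum_inner]
    refine Finset.sum_eq_zero fun a _ => ?_
    rw [inner_sum]
    refine Finset.sum_eq_zero fun b _ => ?_
    rw [inner_tmul]
    by_cases hab : a = b
    · subst hab
      rw [P.orthY a x y hxy, zero_mul]
    · rw [Q.orthY w a b hab, mul_zero]
  · -- sumEq
    intro v w
    rw [Finset.sum_comm]
    calc ∑ a, ∑ x, tmul (P.X a x) (Q.X v a)
        = ∑ a, tmul S (Q.X v a) := by
          refine Finset.sum_congr rfl fun a _ => ?_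
          rw [← tmul_sum_left, hSX a]
      _ = tmul S (∑ a, Q.X v a) := by rw [tmul_sum_right]
      _ = tmul S (∑ b, Q.Y w b) := by rw [Q.sumEq v w]
      _ = ∑ b, tmul S (Q.Y w b) := by rw [tmul_sum_right]
      _ = ∑ b, ∑ y, tmul (P.Y b y) (Q.Y w b) := by
          refine Finset.sum_congr rfl fun b _ => ?_
          rw [← tmul_sum_left, hSY b]
      _ = ∑ y, ∑ b, tmul (P.Y b y) (Q.Y w b) := Finset.sum_comm
  · -- normOne
    intro v
    apply aux_norm_eq_one
    have h1 : (∑ x, ∑ a, tmul (P.X a x) (Q.X v a)) = tmul S (∑ a, Q.X v a) := by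
      rw [Finset.sum_comm, tmul_sum_right]
      exact Finset.sum_congr rfl fun a _ => by rw [← tmul_sum_left, hSX a]
    rw [h1, inner_tmul]
    have h2 : ⟪S, S⟫_ℂ = 1 := by rw [aux_inner_self, hSnorm]; norm_num
    have h3 : ⟪∑ a, Q.X v a, ∑ a, Q.X v a⟫_ℂ = 1 := by
      rw [aux_inner_self, Q.normOne v]; norm_num
    rw [h2, h3, one_mul]
  · -- eq
    intro x y v w
    show ∑ a, ∑ b, p x y a b * q a b v w = _
    rw [sum_inner]
    refine Finset.sum_congr rfl fun a _ => ?_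
    rw [inner_sum]
    refine Finset.sum_congr rfl fun b _ => ?_
    rw [inner_tmul, ← P.eq, ← Q.eq]

lemma aux_sum4_comm {M : Type} [AddCommMonoid M] {ι : Type} [Fintype ι]
    (f : ι → ι → ι → ι → M) :
    ∑ a, ∑ b, ∑ v, ∑ w, f a b v w = ∑ v, ∑ w, ∑ a, ∑ b, f a b v w := by
  calc ∑ a, ∑ b, ∑ v, ∑ w, f a b v w
      = ∑ a, ∑ v, ∑ b, ∑ w, f a b v w :=
        Finset.sum_congr rfl fun a _ => Finset.sum_comm
    _ = ∑ v, ∑ a, ∑ b, ∑ w, f a b v w := Finset.sum_comm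
    _ = ∑ v, ∑ a, ∑ w, ∑ b, f a b v w :=
        Finset.sum_congr rfl fun v _ => Finset.sum_congr rfl fun a _ => Finset.sum_comm
    _ = ∑ v, ∑ w, ∑ a, ∑ b, f a b v w :=
        Finset.sum_congr rfl fun v _ => Finset.sum_comm

/-- Starting from a winning synchronous vectorial strategy `p` for the homomorphism game
from `G` to `G`, the Banach-generalized-limit correlation
`r(x,y|v,w) = glim (k ↦ p_k(x,y|v,w))` of the iterates `p₁ = p`,
`p_{k+1}(x,y|v,w) = Σ_{a,b} p(x,y|a,b) p_k(a,b|v,w)`, is again a winning synchronous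
vectorial strategy for the game from `G` to `G`; moreover `φ_r = ψ_p`, i.e.
`φ_r(A)_{x,y} = glim (k ↦ (φ_p^k(A))_{x,y})`, and
`r(x,y|v,w) = Σ_{a,b} r(x,y|a,b) r(a,b|v,w)`, so `φ_r ∘ φ_r = φ_r`. -/
theorem glim_of_iterates_is_idempotent_strategy {n : ℕ} (G : SimpleGraph (Fin n))
    (p : Fin n → Fin n → Fin n → Fin n → ℂ)
    (hp : IsVectCorrelation p) (hpsync : Synchronous p) (hpwin : WinningFor G G p)
    (pk : ℕ → Fin n → Fin n → Fin n → Fin n → ℂ)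
    (hpk1 : pk 1 = p)
    (hpkrec : ∀ k, 1 ≤ k → ∀ x y v w : Fin n,
      pk (k + 1) x y v w = ∑ a, ∑ b, p x y a b * pk k a b v w)
    (glim : (ℕ → ℂ) →ₗ[ℂ] ℂ) (hglim : IsBanachLimit glim)
    (r : Fin n → Fin n → Fin n → Fin n → ℂ)
    (hr : ∀ x y v w : Fin n, r x y v w = glim (fun k => pk (k + 1) x y v w)) :
    IsVectCorrelation r ∧ Synchronous r ∧ WinningFor G G r ∧
    (∀ A : Matrix (Fin n) (Fin n) ℂ,
      phiMap r A = Matrix.of fun x y => glim (fun k => ((phiMap p)^[k] A) x y)) ∧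
    (∀ x y v w : Fin n, r x y v w = ∑ a, ∑ b, r x y a b * r a b v w) ∧
    phiMap r ∘ phiMap r = phiMap r := by
  classical
  rcases Nat.eq_zero_or_pos n with hn0 | hn
  · -- trivial case n = 0
    subst hn0
    refine ⟨⟨⟨ℂ, fun v => v.elim0, fun v => v.elim0, fun v => v.elim0, fun v => v.elim0,
        fun v => v.elim0, fun v => v.elim0, fun v => v.elim0, fun x => x.elim0⟩⟩,
      fun v => v.elim0, fun v => v.elim0, ?_, fun x => x.elim0, ?_⟩
    · intro A
      funext x
      exact x.elim0
    · funext A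
      show phiMap r (phiMap r A) = phiMap r A
      funext x
      exact x.elim0
  -- main case
  obtain ⟨R⟩ := hp
  letI := R.nacg; letI := R.ips; letI := R.cs
  let Λ0 : (ℕ → ℂ) →ₗ[ℂ] ℂ := LinearMap.proj 0
  have hc0 : ∀ c : ℂ, Λ0 (fun _ => c) = c := fun c => rfl
  have hp0 : ∀ a : ℕ → ℂ, (∃ C : ℝ, ∀ k, ‖a k‖ ≤ C) → (∀ k, 0 ≤ a k) → 0 ≤ Λ0 a :=
    fun a _ h => h 0
  let P₀ : AuxReal p R.H := ⟨R.X, R.Y, R.orthX, R.orthY, R.sumEq, R.normOne, R.eq⟩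
  obtain ⟨PE⟩ := aux_core Λ0 hc0 hp0 (fun _ => p) (fun _ => P₀) p (fun x y v w => rfl)
  -- nonnegativity of the iterates
  have hpknn : ∀ k x y v w, 0 ≤ pk (k+1) x y v w := by
    intro k
    induction k with
    | zero => intro x y v w; simpa [hpk1] using R.nonneg v w x y
    | succ k ih =>
      intro x y v w
      rw [hpkrec (k+1) (Nat.le_add_left 1 k) x y v w]
      refine Finset.sum_nonneg fun a _ => Finset.sum_nonneg fun b _ => ?_
      exact mul_nonneg (R.nonneg a b x y) (ih a b v w)
  -- euclidean realizations of all iterates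
  have hE : ∀ k, Nonempty (AuxReal (pk (k+1)) (EuclideanSpace ℂ (Bool × Fin n × Fin n))) := by
    intro k
    induction k with
    | zero =>
      have h01 : pk (0+1) = p := by simpa using hpk1
      rw [h01]
      exact ⟨PE⟩
    | succ k ih =>
      obtain ⟨Ek⟩ := ih
      obtain ⟨C⟩ := aux_comp hn PE Ek
      have hfe : (fun x y v w => ∑ a, ∑ b, p x y a b * pk (k+1) a b v w) = pk (k+1+1) := by
        funext x y v w
        exact (hpkrec (k+1) (Nat.le_add_left 1 k) x y v w).symm
      rw [← hfe]
      exact aux_core Λ0 hc0 hp0 (fun _ => _) (fun _ => C) _ (fun x y v w => rfl)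
  have E : ∀ k, AuxReal (pk (k+1)) (EuclideanSpace ℂ (Bool × Fin n × Fin n)) :=
    fun k => (hE k).some
  have hbound : ∀ k x y v w, ‖pk (k+1) x y v w‖ ≤ 1 :=
    fun k x y v w => (E k).abs_le_one x y v w
  have hgc : ∀ c : ℂ, glim (fun _ => c) = c := fun c => hglim.1 _ c tendsto_const_nhds
  -- the realization of r
  obtain ⟨Rr⟩ := aux_core glim hgc hglim.2.1 (fun k => pk (k+1)) E r hr
  have hrcorr : IsVectCorrelation r := by
    refine ⟨⟨EuclideanSpace ℂ (Bool × Fin n × Fin n), Rr.X, Rr.Y, Rr.orthX, Rr.orthY,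
      Rr.sumEq, Rr.normOne, ?_, Rr.eq⟩⟩
    intro v w x y
    rw [hr]
    exact hglim.2.1 _ ⟨1, fun k => hbound k x y v w⟩ (fun k => hpknn k x y v w)
  -- synchronicity
  have hsync : Synchronous r := by
    have hsk : ∀ k v x y, x ≠ y → pk (k+1) x y v v = 0 := by
      intro k
      induction k with
      | zero => intro v x y hxy; simpa [hpk1] using hpsync v x y hxy
      | succ k ih =>
        intro v x y hxy
        rw [hpkrec (k+1) (Nat.le_add_left 1 k)]
        refine Finset.sum_eq_zero fun a _ => Finset.sum_eq_zero fun b _ => ?_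
        by_cases hab : a = b
        · subst hab; rw [hpsync a x y hxy, zero_mul]
        · rw [ih v a b hab, mul_zero]
    intro v x y hxy
    rw [hr]
    have h0 : (fun k => pk (k+1) x y v v) = fun _ => (0:ℂ) := funext fun k => hsk k v x y hxy
    rw [h0]
    exact hgc 0
  -- winning
  have hwin : WinningFor G G r := by
    have hwk : ∀ k v w x y, G.Adj v w → ¬ G.Adj x y → pk (k+1) x y v w = 0 := by
      intro k
      induction k with
      | zero => intro v w x y hvw hxy; simpa [hpk1] using hpwin v w x y hvw hxy
      | succ k ih =>
        intro v w x y hvw hxy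
        rw [hpkrec (k+1) (Nat.le_add_left 1 k)]
        refine Finset.sum_eq_zero fun a _ => Finset.sum_eq_zero fun b _ => ?_
        by_cases hab : G.Adj a b
        · rw [hpwin a b x y hab hxy, zero_mul]
        · rw [ih v w a b hvw hab, mul_zero]
    intro v w x y hvw hxy
    rw [hr]
    have h0 : (fun k => pk (k+1) x y v w) = fun _ => (0:ℂ) :=
      funext fun k => hwk k v w x y hvw hxy
    rw [h0]
    exact hgc 0
  -- iterates of phiMap p
  have hiter : ∀ m, 1 ≤ m → ∀ (A : Matrix (Fin n) (Fin n) ℂ) (x y : Fin n),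
      ((phiMap p)^[m] A) x y = ∑ v, ∑ w, pk m x y v w * A v w := by
    intro m hm
    induction m, hm using Nat.le_induction with
    | base =>
      intro A x y
      rw [Function.iterate_one]
      show (phiMap p A) x y = _
      rw [hpk1]
      rfl
    | succ m hm ih =>
      intro A x y
      rw [Function.iterate_succ_apply']
      show ∑ a, ∑ b, p x y a b * ((phiMap p)^[m] A) a b = _
      calc ∑ a, ∑ b, p x y a b * ((phiMap p)^[m] A) a b
          = ∑ a, ∑ b, ∑ v, ∑ w, p x y a b * (pk m a b v w * A v w) := by
            refine Finset.sum_congr rfl fun a _ => Finset.sum_congr rfl fun b _ => ?_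
            rw [ih A a b, Finset.mul_sum]
            exact Finset.sum_congr rfl fun v _ => by rw [Finset.mul_sum]
        _ = ∑ v, ∑ w, ∑ a, ∑ b, p x y a b * (pk m a b v w * A v w) := aux_sum4_comm _
        _ = ∑ v, ∑ w, pk (m+1) x y v w * A v w := by
            refine Finset.sum_congr rfl fun v _ => Finset.sum_congr rfl fun w _ => ?_
            rw [hpkrec m hm, Finset.sum_mul]
            refine Finset.sum_congr rfl fun a _ => ?_
            rw [Finset.sum_mul]
            exact Finset.sum_congr rfl fun b _ => by ring
  -- uniform bound on entries of iterates
  have hAb : ∀ (A : Matrix (Fin n) (Fin n) ℂ) (m : ℕ) (x y : Fin n),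
      ‖((phiMap p)^[m] A) x y‖ ≤ ∑ v, ∑ w, ‖A v w‖ := by
    intro A m x y
    match m with
    | 0 =>
      rw [Function.iterate_zero_apply]
      calc ‖A x y‖ ≤ ∑ w, ‖A x w‖ :=
            Finset.single_le_sum (f := fun w => ‖A x w‖)
              (fun w _ => norm_nonneg _) (Finset.mem_univ y)
        _ ≤ ∑ v, ∑ w, ‖A v w‖ :=
            Finset.single_le_sum (f := fun v => ∑ w, ‖A v w‖)
              (fun v _ => Finset.sum_nonneg fun w _ => norm_nonneg _) (Finset.mem_univ x)
    | m+1 =>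
      rw [hiter (m+1) (Nat.le_add_left 1 m) A x y]
      calc ‖∑ v, ∑ w, pk (m+1) x y v w * A v w‖
          ≤ ∑ v, ‖∑ w, pk (m+1) x y v w * A v w‖ := norm_sum_le _ _
        _ ≤ ∑ v, ∑ w, ‖pk (m+1) x y v w * A v w‖ :=
            Finset.sum_le_sum fun v _ => norm_sum_le _ _
        _ ≤ ∑ v, ∑ w, ‖A v w‖ := by
            refine Finset.sum_le_sum fun v _ => Finset.sum_le_sum fun w _ => ?_
            rw [norm_mul]
            exact mul_le_of_le_one_left (norm_nonneg _) (hbound m x y v w)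
  -- iterated shift invariance
  have hshift : ∀ (a : ℕ → ℂ) (C : ℝ), (∀ k, ‖a k‖ ≤ C) →
      ∀ m, glim (fun k => a (m + k)) = glim a := by
    intro a C hC m
    induction m with
    | zero => simp only [Nat.zero_add]
    | succ m ih =>
      have h1 : (fun k => a (m + 1 + k)) = fun k => a (m + (k + 1)) := by
        funext k; congr 1; omega
      rw [h1]
      have h2 := hglim.2.2 (fun j => a (m + j)) ⟨C, fun k => hC _⟩
      exact h2.trans ih
  -- the map ψ
  let ψ : Matrix (Fin n) (Fin n) ℂ → Matrix (Fin n) (Fin n) ℂ :=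
    fun A => Matrix.of fun x y => glim (fun k => ((phiMap p)^[k] A) x y)
  have hψval : ∀ A x y, ψ A x y = glim (fun k => ((phiMap p)^[k] A) x y) := fun _ _ _ => rfl
  -- φ_r = ψ
  have hphir : ∀ A : Matrix (Fin n) (Fin n) ℂ,
      phiMap r A = Matrix.of fun x y => glim (fun k => ((phiMap p)^[k] A) x y) := by
    intro A
    funext x y
    show ∑ v, ∑ w, r x y v w * A v w = glim (fun k => ((phiMap p)^[k] A) x y)
    have e1 : ∑ v, ∑ w, r x y v w * A v w
        = glim (fun k => ∑ v, ∑ w, pk (k+1) x y v w * A v w) := by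
      rw [lam_sum]
      refine Finset.sum_congr rfl fun v _ => ?_
      rw [lam_sum]
      refine Finset.sum_congr rfl fun w _ => ?_
      have hcm : (fun k => pk (k+1) x y v w * A v w) = fun k => A v w * pk (k+1) x y v w :=
        funext fun k => mul_comm _ _
      rw [hcm, lam_mul, ← hr]
      ring
    have e2 : (fun k => ∑ v, ∑ w, pk (k+1) x y v w * A v w)
        = fun k => ((phiMap p)^[k+1] A) x y :=
      funext fun k => (hiter (k+1) (Nat.le_add_left 1 k) A x y).symm
    rw [e1, e2]
    exact hglim.2.2 (fun k => ((phiMap p)^[k] A) x y)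
      ⟨∑ v, ∑ w, ‖A v w‖, fun k => hAb A k x y⟩
  have hphirψ : ∀ A, phiMap r A = ψ A := hphir
  -- ψ is idempotent
  have hfix : ∀ (A : Matrix (Fin n) (Fin n) ℂ) (K : ℕ) (x y : Fin n),
      ((phiMap p)^[K] (ψ A)) x y = glim (fun j => ((phiMap p)^[K + j] A) x y) := by
    intro A K
    induction K with
    | zero =>
      intro x y
      rw [Function.iterate_zero_apply, hψval]
      simp only [Nat.zero_add]
    | succ K ih =>
      intro x y
      rw [Function.iterate_succ_apply']
      show ∑ v, ∑ w, p x y v w * ((phiMap p)^[K] (ψ A)) v w = _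
      calc ∑ v, ∑ w, p x y v w * ((phiMap p)^[K] (ψ A)) v w
          = ∑ v, ∑ w, p x y v w * glim (fun j => ((phiMap p)^[K + j] A) v w) := by
            refine Finset.sum_congr rfl fun v _ => Finset.sum_congr rfl fun w _ => ?_
            rw [ih v w]
        _ = glim (fun j => ∑ v, ∑ w, p x y v w * ((phiMap p)^[K + j] A) v w) := by
            rw [lam_sum]
            refine Finset.sum_congr rfl fun v _ => ?_
            rw [lam_sum]
            exact Finset.sum_congr rfl fun w _ => (lam_mul glim _ _).symm
        _ = glim (fun j => ((phiMap p)^[K + 1 + j] A) x y) := by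
            congr 1
            funext j
            rw [show K + 1 + j = K + j + 1 from by omega, Function.iterate_succ_apply']
            rfl
  have hpsi2 : ∀ A, ψ (ψ A) = ψ A := by
    intro A
    funext x y
    show glim (fun k => ((phiMap p)^[k] (ψ A)) x y) = ψ A x y
    have h1 : (fun k => ((phiMap p)^[k] (ψ A)) x y) = fun _ => ψ A x y := by
      funext K
      rw [hfix A K x y, hψval]
      exact hshift (fun j => ((phiMap p)^[j] A) x y)
        (∑ v, ∑ w, ‖A v w‖) (fun j => hAb A j x y) K
    rw [h1]
    exact hgc _
  -- idempotency of φ_r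
  have hidem : phiMap r ∘ phiMap r = phiMap r := by
    funext A
    show phiMap r (phiMap r A) = phiMap r A
    rw [hphirψ A, hphirψ (ψ A)]
    exact hpsi2 A
  -- the composition identity for r
  have hrr : ∀ x y v w : Fin n, r x y v w = ∑ a, ∑ b, r x y a b * r a b v w := by
    intro x y v w
    let Ev : Matrix (Fin n) (Fin n) ℂ := Matrix.of fun v' w' => if v' = v ∧ w' = w then 1 else 0
    have hEv : ∀ (c : Fin n → Fin n → ℂ), (∑ a, ∑ b, c a b * Ev a b) = c v w := by
      intro c
      have h1 : ∀ a, (∑ b, c a b * Ev a b) = if a = v then c a w else 0 := by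
        intro a
        by_cases ha : a = v
        · subst ha
          simp only [Ev, Matrix.of_apply, mul_ite, mul_one, mul_zero, ite_and, if_pos rfl,
            if_pos trivial]
          simp [Finset.sum_ite_eq' Finset.univ w (fun b => c a b)]
        · simp only [Ev, Matrix.of_apply, mul_ite, mul_one, mul_zero, ite_and, if_neg ha]
          simp [ha]
      rw [Finset.sum_congr rfl (fun a _ => h1 a)]
      simp [Finset.sum_ite_eq' Finset.univ v (fun a => c a w)]
    have h6 : phiMap r (phiMap r Ev) = phiMap r Ev := congrFun hidem Ev
    calc r x y v w = ∑ a, ∑ b, r x y a b * Ev a b := (hEv (r x y)).symm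
      _ = (phiMap r Ev) x y := rfl
      _ = (phiMap r (phiMap r Ev)) x y := by rw [h6]
      _ = ∑ a, ∑ b, r x y a b * (phiMap r Ev) a b := rfl
      _ = ∑ a, ∑ b, r x y a b * r a b v w := by
          refine Finset.sum_congr rfl fun a _ => Finset.sum_congr rfl fun b _ => ?_
          congr 1
          exact hEv (r a b)
  exact ⟨hrcorr, hsync, hwin, hphir, hrr, hidem⟩
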